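/- Let X be a normed linear space and f : X → ℝ ∪ {+∞} a convex function. Then for every x ∈ X with f(x) < +∞, the local slope equals the subdifferential slope: |∇f|(x) = |∂f|(x). -/

import Mathlib

open Filter Metric Topology ENNReal

/-- The "positive part" of an extended real, as an element of `ℝ≥0∞`. -/
noncomputable def ePlus (a : EReal) : ℝ≥0∞ := if a = ⊤ then ⊤ else ENNReal.ofReal a.toReal

variable {X : Type*} [NormedAddCommGroup X] [NormedSpace ℝ X]

/-- The local slope `|∇f|(x) := limsup_{u→x, u≠x} [f(x) − f(u)]₊ / ‖u − x‖`. -/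
noncomputable def locSlope (f : X → EReal) (x : X) : ℝ≥0∞ :=
  Filter.limsup (fun u => ePlus (f x - f u) / ENNReal.ofReal ‖u - x‖) (𝓝[≠] x)

/-- The Fréchet subdifferential of `f` at `x` (empty when `f(x) = +∞`);
the defining liminf inequality is expressed in the equivalent ε-form. -/
def frSubdiff (f : X → EReal) (x : X) : Set (X →L[ℝ] ℝ) :=
  {p | f x ≠ ⊤ ∧ ∀ ε : ℝ, 0 < ε →
    ∀ᶠ u in 𝓝[≠] x, f x + ((p (u - x) - ε * ‖u - x‖ : ℝ) : EReal) ≤ f u}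

/-- The subdifferential slope `|∂f|(x) := inf {‖x*‖ : x* ∈ ∂f(x)}` (`inf ∅ = +∞`). -/
noncomputable def sdSlope (f : X → EReal) (x : X) : ℝ≥0∞ :=
  ⨅ (p : X →L[ℝ] ℝ) (_ : p ∈ frSubdiff f x), (‖p‖₊ : ℝ≥0∞)

section helpers
open NNReal
lemma ePlus_coe (c : ℝ) : ePlus (c : EReal) = ENNReal.ofReal c := by
  simp [ePlus]

lemma ePlus_bot : ePlus (⊥ : EReal) = 0 := by
  simp [ePlus]

lemma locSlope_le_of_mem (f : X → EReal) (hbot : ∀ u, f u ≠ ⊥) (x : X)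
    (p : X →L[ℝ] ℝ) (hp : p ∈ frSubdiff f x) : locSlope f x ≤ (‖p‖₊ : ℝ≥0∞) := by
  obtain ⟨hfx, hev⟩ := hp
  have key : ∀ ε : ℝ, 0 < ε → locSlope f x ≤ ENNReal.ofReal (‖p‖ + ε) := by
    intro ε hε
    apply Filter.limsup_le_of_le
    · isBoundedDefault
    filter_upwards [hev ε hε, self_mem_nhdsWithin] with u hu hux
    have hux' : u ≠ x := hux
    have hnorm : 0 < ‖u - x‖ := by
      rw [norm_pos_iff]; exact sub_ne_zero_of_ne hux'
    by_cases hfu : f u = ⊤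
    · have : f x - f u = ⊥ := by rw [hfu]; exact EReal.sub_top _
      rw [this, ePlus_bot, ENNReal.zero_div]
      exact zero_le
    · -- both finite
      have hxR : ((f x).toReal : EReal) = f x := EReal.coe_toReal hfx (hbot x)
      have huR : ((f u).toReal : EReal) = f u := EReal.coe_toReal hfu (hbot u)
      set a := (f x).toReal
      set b := (f u).toReal
      have hsub : f x - f u = ((a - b : ℝ) : EReal) := by
        rw [← hxR, ← huR, EReal.coe_sub]
      have hineq : a + (p (u - x) - ε * ‖u - x‖) ≤ b := by
        have := hu
        rw [← hxR, ← huR, ← EReal.coe_add, EReal.coe_le_coe_iff] at this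
        exact this
      have h1 : a - b ≤ (‖p‖ + ε) * ‖u - x‖ := by
        have hpb : -(p (u - x)) ≤ ‖p‖ * ‖u - x‖ := by
          have := le_abs_self (-(p (u-x)))
          have h2 : |(-(p (u-x)))| = ‖p (u-x)‖ := by rw [abs_neg]; rfl
          calc -(p (u-x)) ≤ |(-(p (u-x)))| := le_abs_self _
            _ = ‖p (u-x)‖ := h2
            _ ≤ ‖p‖ * ‖u-x‖ := p.le_opNorm _
        nlinarith
      rw [hsub, ePlus_coe]
      rw [ENNReal.div_le_iff (by simpa using hnorm.ne') (by simp)]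
      calc ENNReal.ofReal (a - b) ≤ ENNReal.ofReal ((‖p‖ + ε) * ‖u - x‖) :=
            ENNReal.ofReal_le_ofReal h1
        _ = ENNReal.ofReal (‖p‖ + ε) * ENNReal.ofReal ‖u - x‖ := by
            rw [ENNReal.ofReal_mul (by positivity)]
  have : locSlope f x ≤ ENNReal.ofReal ‖p‖ := by
    refine ENNReal.le_of_forall_pos_le_add fun ε hε _ => ?_
    calc locSlope f x ≤ ENNReal.ofReal (‖p‖ + ε) := key ε (by exact_mod_cast hε)
      _ = ENNReal.ofReal ‖p‖ + ENNReal.ofReal ε := ENNReal.ofReal_add (norm_nonneg _) ε.2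
      _ = ENNReal.ofReal ‖p‖ + ε := by rw [ENNReal.ofReal_coe_nnreal]
  rw [← ENNReal.ofReal_coe_nnreal, coe_nnnorm]; exact this

/-- difference quotient -/
noncomputable def qReal (f : X → EReal) (x : X) (t : ℝ) (w : X) : ℝ :=
  ((f (x + t • w)).toReal - (f x).toReal) / t

lemma quot_mono (f : X → EReal) (hbot : ∀ u, f u ≠ ⊥)
    (hconv : ∀ u v : X, ∀ t : ℝ, 0 ≤ t → t ≤ 1 →
      f (t • u + (1 - t) • v) ≤ (t : EReal) * f u + ((1 - t : ℝ) : EReal) * f v)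
    (x : X) (hfin : f x ≠ ⊤) (w : X) {s t : ℝ} (hs : 0 < s) (hst : s ≤ t)
    (hft : f (x + t • w) ≠ ⊤) :
    f (x + s • w) ≠ ⊤ ∧ qReal f x s w ≤ qReal f x t w := by
  have ht : 0 < t := lt_of_lt_of_le hs hst
  set lam := s / t with hlam
  have hlam0 : 0 < lam := div_pos hs ht
  have hlam1 : lam ≤ 1 := (div_le_one ht).2 hst
  have hxe : lam • (x + t • w) + (1 - lam) • x = x + s • w := by
    rw [smul_add, smul_smul, hlam, div_mul_cancel₀ _ ht.ne']
    module
  have hc := hconv (x + t • w) x lam hlam0.le hlam1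
  rw [hxe] at hc
  set A := (f (x + t • w)).toReal
  set B := (f x).toReal
  have hA : ((A : ℝ) : EReal) = f (x + t • w) := EReal.coe_toReal hft (hbot _)
  have hB : ((B : ℝ) : EReal) = f x := EReal.coe_toReal hfin (hbot _)
  have hrhs : (lam : EReal) * f (x + t • w) + ((1 - lam : ℝ) : EReal) * f x
      = ((lam * A + (1 - lam) * B : ℝ) : EReal) := by
    rw [← hA, ← hB, ← EReal.coe_mul, ← EReal.coe_mul, ← EReal.coe_add]
  rw [hrhs] at hc
  have hne : f (x + s • w) ≠ ⊤ := ne_top_of_le_ne_top (EReal.coe_ne_top _) hc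
  refine ⟨hne, ?_⟩
  have hR : (f (x + s • w)).toReal ≤ lam * A + (1 - lam) * B := by
    have := EReal.toReal_le_toReal hc (hbot _) (EReal.coe_ne_top _)
    rwa [EReal.toReal_coe] at this
  unfold qReal
  rw [div_le_div_iff₀ hs ht]
  have hlam' : lam * t = s := div_mul_cancel₀ _ ht.ne'
  have h2 := mul_le_mul_of_nonneg_right hR ht.le
  have h3 : (lam * A + (1 - lam) * B) * t = A * s + B * t - B * s := by
    linear_combination (A - B) * hlam'
  rw [h3] at h2
  show ((f (x + s • w)).toReal - B) * t ≤ (A - B) * s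
  linarith

/-- candidate set for the inf-convolution -/
def SS (f : X → EReal) (x : X) (r : ℝ) (v : X) : Set ℝ :=
  {a | ∃ w : X, ∃ t : ℝ, 0 < t ∧ t ≤ 1 ∧ f (x + t • w) ≠ ⊤ ∧
      a = qReal f x t w + r * ‖v - w‖}

noncomputable def NN (f : X → EReal) (x : X) (r : ℝ) (v : X) : ℝ := sInf (SS f x r v)

section props
variable (f : X → EReal) (x : X) (r : ℝ)

lemma SS_nonempty (hfin : f x ≠ ⊤) (v : X) : (r * ‖v‖) ∈ SS f x r v := by
  refine ⟨0, 1, one_pos, le_refl 1, ?_, ?_⟩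
  · simpa using hfin
  · simp [qReal]

lemma SS_lb (hr : 0 ≤ r)
    (hg : ∀ w : X, f (x + w) ≠ ⊤ → (f x).toReal - r * ‖w‖ ≤ (f (x + w)).toReal)
    (v : X) : ∀ a ∈ SS f x r v, -(r * ‖v‖) ≤ a := by
  rintro a ⟨w, t, ht0, ht1, hft, rfl⟩
  have hq : -(r * ‖w‖) ≤ qReal f x t w := by
    have := hg (t • w) hft
    have hn : ‖t • w‖ = t * ‖w‖ := by
      rw [norm_smul, Real.norm_eq_abs, abs_of_pos ht0]
    rw [hn] at this
    unfold qReal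
    rw [le_div_iff₀ ht0]
    nlinarith
  have htri : ‖w‖ ≤ ‖v‖ + ‖v - w‖ := by
    calc ‖w‖ = ‖v - (v - w)‖ := by rw [show v - (v - w) = w by abel]
      _ ≤ ‖v‖ + ‖v - w‖ := norm_sub_le _ _
  have h1 : r * ‖w‖ ≤ r * ‖v‖ + r * ‖v - w‖ := by nlinarith [mul_le_mul_of_nonneg_left htri hr]
  linarith [hq]

lemma NN_bddBelow (hr : 0 ≤ r)
    (hg : ∀ w : X, f (x + w) ≠ ⊤ → (f x).toReal - r * ‖w‖ ≤ (f (x + w)).toReal)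
    (v : X) : BddBelow (SS f x r v) := ⟨-(r * ‖v‖), SS_lb f x r hr hg v⟩

lemma NN_le (hfin : f x ≠ ⊤) (v : X) (hr : 0 ≤ r)
    (hg : ∀ w : X, f (x + w) ≠ ⊤ → (f x).toReal - r * ‖w‖ ≤ (f (x + w)).toReal) :
    NN f x r v ≤ r * ‖v‖ :=
  csInf_le (NN_bddBelow f x r hr hg v) (SS_nonempty f x r hfin v)

lemma NN_ge (hfin : f x ≠ ⊤) (v : X) (hr : 0 ≤ r)
    (hg : ∀ w : X, f (x + w) ≠ ⊤ → (f x).toReal - r * ‖w‖ ≤ (f (x + w)).toReal) :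
    -(r * ‖v‖) ≤ NN f x r v :=
  le_csInf ⟨_, SS_nonempty f x r hfin v⟩ (SS_lb f x r hr hg v)

lemma NN_le_quot (hfin : f x ≠ ⊤) (v : X) (hfv : f (x + v) ≠ ⊤) (hr : 0 ≤ r)
    (hg : ∀ w : X, f (x + w) ≠ ⊤ → (f x).toReal - r * ‖w‖ ≤ (f (x + w)).toReal) :
    NN f x r v ≤ (f (x + v)).toReal - (f x).toReal := by
  refine csInf_le (NN_bddBelow f x r hr hg v) ⟨v, 1, one_pos, le_refl 1, ?_, ?_⟩
  · simpa using hfv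
  · simp [qReal]

end props

section sub
variable (f : X → EReal) (x : X) (r : ℝ)
  (hbot : ∀ u, f u ≠ ⊥)
  (hconv : ∀ u v : X, ∀ t : ℝ, 0 ≤ t → t ≤ 1 →
      f (t • u + (1 - t) • v) ≤ (t : EReal) * f u + ((1 - t : ℝ) : EReal) * f v)
  (hfin : f x ≠ ⊤) (hr : 0 ≤ r)
  (hg : ∀ w : X, f (x + w) ≠ ⊤ → (f x).toReal - r * ‖w‖ ≤ (f (x + w)).toReal)

include hbot hconv hfin hr hg

lemma SS_key_add : ∀ v v' : X, ∀ a ∈ SS f x r v, ∀ b ∈ SS f x r v',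
    ∃ c ∈ SS f x r (v + v'), c ≤ a + b := by
  rintro v v' a ⟨w, t, ht0, ht1, hft, rfl⟩ b ⟨w', t', ht0', ht1', hft', rfl⟩
  set s := min t t' with hs
  have hs0 : 0 < s := lt_min ht0 ht0'
  have hs1 : s ≤ 1 := le_trans (min_le_left _ _) ht1
  obtain ⟨hfs, hq1⟩ := quot_mono f hbot hconv x hfin w hs0 (min_le_left _ _) hft
  obtain ⟨hfs', hq2⟩ := quot_mono f hbot hconv x hfin w' hs0 (min_le_right _ _) hft'
  -- midpoint
  have hc := hconv (x + s • w) (x + s • w') (1/2) (by norm_num) (by norm_num)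
  have hpt : (1/2 : ℝ) • (x + s • w) + (1 - 1/2 : ℝ) • (x + s • w')
      = x + (s/2) • (w + w') := by
    norm_num
    match_scalars <;> ring
  rw [hpt] at hc
  set A := (f (x + s • w)).toReal
  set B := (f (x + s • w')).toReal
  have hA : ((A : ℝ) : EReal) = f (x + s • w) := EReal.coe_toReal hfs (hbot _)
  have hB : ((B : ℝ) : EReal) = f (x + s • w') := EReal.coe_toReal hfs' (hbot _)
  have hrhs : ((1/2 : ℝ) : EReal) * f (x + s • w) + ((1 - 1/2 : ℝ) : EReal) * f (x + s • w')
      = (((1/2) * A + (1/2) * B : ℝ) : EReal) := by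
    rw [← hA, ← hB, ← EReal.coe_mul, ← EReal.coe_mul, ← EReal.coe_add]
    norm_num
  rw [hrhs] at hc
  have hne : f (x + (s/2) • (w + w')) ≠ ⊤ := ne_top_of_le_ne_top (EReal.coe_ne_top _) hc
  have hR : (f (x + (s/2) • (w + w'))).toReal ≤ (1/2) * A + (1/2) * B := by
    have := EReal.toReal_le_toReal hc (hbot _) (EReal.coe_ne_top _)
    rwa [EReal.toReal_coe] at this
  have hqmid : qReal f x (s/2) (w + w') ≤ qReal f x s w + qReal f x s w' := by
    unfold qReal
    rw [← add_div, div_le_div_iff₀ (by linarith) hs0]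
    nlinarith [hR]
  refine ⟨qReal f x (s/2) (w + w') + r * ‖(v + v') - (w + w')‖,
    ⟨w + w', s/2, by linarith, by linarith, hne, rfl⟩, ?_⟩
  have htri : ‖(v + v') - (w + w')‖ ≤ ‖v - w‖ + ‖v' - w'‖ := by
    calc ‖(v + v') - (w + w')‖ = ‖(v - w) + (v' - w')‖ := by
          rw [show (v + v') - (w + w') = (v - w) + (v' - w') by abel]
      _ ≤ ‖v - w‖ + ‖v' - w'‖ := norm_add_le _ _
  have h1 : r * ‖(v + v') - (w + w')‖ ≤ r * ‖v - w‖ + r * ‖v' - w'‖ := by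
    nlinarith [mul_le_mul_of_nonneg_left htri hr]
  linarith [hq1, hq2]

lemma NN_add : ∀ v v' : X, NN f x r (v + v') ≤ NN f x r v + NN f x r v' := by
  intro v v'
  have hkey := SS_key_add f x r hbot hconv hfin hr hg v v'
  have hbdd := NN_bddBelow f x r hr hg (v + v')
  have hne : (SS f x r v).Nonempty := ⟨_, SS_nonempty f x r hfin v⟩
  have hne' : (SS f x r v').Nonempty := ⟨_, SS_nonempty f x r hfin v'⟩
  have h1 : ∀ a ∈ SS f x r v, NN f x r (v + v') - a ≤ NN f x r v' := by
    intro a ha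
    refine le_csInf hne' fun b hb => ?_
    obtain ⟨c, hc, hcab⟩ := hkey a ha b hb
    have := csInf_le hbdd hc
    unfold NN
    linarith
  have h2 : NN f x r (v + v') - NN f x r v' ≤ NN f x r v := by
    refine le_csInf hne fun a ha => ?_
    linarith [h1 a ha]
  linarith

lemma SS_key_smul : ∀ (c : ℝ), 0 < c → ∀ v : X, ∀ a ∈ SS f x r v,
    ∃ b ∈ SS f x r (c • v), b ≤ c * a := by
  rintro c hc v a ⟨w, t, ht0, ht1, hft, rfl⟩
  set t' := min (t / c) 1 with ht'
  have htc : 0 < t / c := div_pos ht0 hc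
  have ht'0 : 0 < t' := lt_min htc one_pos
  have ht'1 : t' ≤ 1 := min_le_right _ _
  have heq : x + (t / c) • (c • w) = x + t • w := by
    rw [smul_smul, div_mul_cancel₀ _ hc.ne']
  have hftc : f (x + (t / c) • (c • w)) ≠ ⊤ := by rw [heq]; exact hft
  obtain ⟨hfs, hq⟩ := quot_mono f hbot hconv x hfin (c • w) ht'0 (min_le_left _ _) hftc
  have hqtc : qReal f x (t / c) (c • w) = c * qReal f x t w := by
    unfold qReal
    rw [heq]
    field_simp
  refine ⟨qReal f x t' (c • w) + r * ‖c • v - c • w‖,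
    ⟨c • w, t', ht'0, ht'1, hfs, rfl⟩, ?_⟩
  have hnorm : ‖c • v - c • w‖ = c * ‖v - w‖ := by
    rw [← smul_sub, norm_smul, Real.norm_eq_abs, abs_of_pos hc]
  rw [hnorm]
  rw [hqtc] at hq
  nlinarith [hq]

lemma NN_smul : ∀ (c : ℝ), 0 < c → ∀ v : X, NN f x r (c • v) = c * NN f x r v := by
  have hle : ∀ (c : ℝ), 0 < c → ∀ v : X, NN f x r (c • v) ≤ c * NN f x r v := by
    intro c hc v
    have h1 : NN f x r (c • v) / c ≤ NN f x r v := by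
      refine le_csInf ⟨_, SS_nonempty f x r hfin v⟩ fun a ha => ?_
      obtain ⟨b, hb, hba⟩ := SS_key_smul f x r hbot hconv hfin hr hg c hc v a ha
      have := csInf_le (NN_bddBelow f x r hr hg (c • v)) hb
      rw [div_le_iff₀ hc]
      unfold NN
      nlinarith
    calc NN f x r (c • v) = c * (NN f x r (c • v) / c) := by field_simp
      _ ≤ c * NN f x r v := by nlinarith [h1]
  intro c hc v
  refine le_antisymm (hle c hc v) ?_
  have := hle c⁻¹ (by positivity) (c • v)
  rw [smul_smul, inv_mul_cancel₀ hc.ne', one_smul] at this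
  calc c * NN f x r v ≤ c * (c⁻¹ * NN f x r (c • v)) := by nlinarith [this, hc]
    _ = NN f x r (c • v) := by field_simp

end sub


lemma exists_subgrad (f : X → EReal) (hbot : ∀ u, f u ≠ ⊥)
    (hconv : ∀ u v : X, ∀ t : ℝ, 0 ≤ t → t ≤ 1 →
      f (t • u + (1 - t) • v) ≤ (t : EReal) * f u + ((1 - t : ℝ) : EReal) * f v)
    (x : X) (hfin : f x ≠ ⊤) (r : ℝ≥0)
    (hr : ∀ᶠ u in 𝓝[≠] x,
      ePlus (f x - f u) / ENNReal.ofReal ‖u - x‖ < (r : ℝ≥0∞)) :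
    ∃ p : X →L[ℝ] ℝ, (f x ≠ ⊤ ∧ ∀ ε : ℝ, 0 < ε →
      ∀ᶠ u in 𝓝[≠] x, f x + ((p (u - x) - ε * ‖u - x‖ : ℝ) : EReal) ≤ f u)
      ∧ (‖p‖₊ : ℝ≥0∞) ≤ (r : ℝ≥0∞) := by
  have hr0 : (0 : ℝ) ≤ (r : ℝ) := r.2
  set fxR := (f x).toReal with hfxR
  have hfx : ((fxR : ℝ) : EReal) = f x := EReal.coe_toReal hfin (hbot x)
  -- Step 1: local real bound
  have hloc : ∀ᶠ u in 𝓝[≠] x, f u ≠ ⊤ → fxR - r * ‖u - x‖ ≤ (f u).toReal := by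
    filter_upwards [hr, self_mem_nhdsWithin] with u hu hux hfu
    have hux' : u ≠ x := hux
    have hn : 0 < ‖u - x‖ := by rw [norm_pos_iff]; exact sub_ne_zero_of_ne hux'
    have hfuc : ((f u).toReal : EReal) = f u := EReal.coe_toReal hfu (hbot u)
    have hsub : f x - f u = ((fxR - (f u).toReal : ℝ) : EReal) := by
      rw [← hfx, ← hfuc]; norm_cast
    rw [hsub] at hu
    have heq : ePlus ((fxR - (f u).toReal : ℝ) : EReal) = ENNReal.ofReal (fxR - (f u).toReal) := by
      unfold ePlus
      rw [if_neg (EReal.coe_ne_top _), EReal.toReal_coe]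
    rw [heq, ENNReal.div_lt_iff (Or.inl (by simpa using hn.ne')) (Or.inl ENNReal.ofReal_ne_top)]
      at hu
    have hrhs : (r : ℝ≥0∞) * ENNReal.ofReal ‖u - x‖ = ENNReal.ofReal ((r : ℝ) * ‖u - x‖) := by
      rw [ENNReal.ofReal_mul hr0, ENNReal.ofReal_coe_nnreal]
    rw [hrhs] at hu
    have := (ENNReal.ofReal_le_ofReal_iff (by positivity)).1 hu.le
    linarith
  -- Step 2: get a ball
  obtain ⟨δ, hδ, hball⟩ := Metric.mem_nhdsWithin_iff.1 hloc
  -- Step 3: global bound hg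
  have hg : ∀ w : X, f (x + w) ≠ ⊤ → fxR - r * ‖w‖ ≤ (f (x + w)).toReal := by
    intro w hfw
    rcases eq_or_ne w 0 with rfl | hw0
    · simp [← hfxR]
    have hnw : 0 < ‖w‖ := norm_pos_iff.2 hw0
    set t := min (δ / (2 * ‖w‖)) 1 with ht
    have ht0 : 0 < t := lt_min (by positivity) one_pos
    have ht1 : t ≤ 1 := min_le_right _ _
    -- convexity: f(x + t w) ≤ t f(x+w) + (1-t) f x
    have hpt : t • (x + w) + (1 - t) • x = x + t • w := by
      match_scalars <;> ring
    have hc := hconv (x + w) x t ht0.le ht1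
    rw [hpt] at hc
    set A := (f (x + w)).toReal
    have hA : ((A : ℝ) : EReal) = f (x + w) := EReal.coe_toReal hfw (hbot _)
    have hrhs : (t : EReal) * f (x + w) + ((1 - t : ℝ) : EReal) * f x
        = ((t * A + (1 - t) * fxR : ℝ) : EReal) := by
      rw [← hA, ← hfx, ← EReal.coe_mul, ← EReal.coe_mul, ← EReal.coe_add]
    rw [hrhs] at hc
    have hne : f (x + t • w) ≠ ⊤ := ne_top_of_le_ne_top (EReal.coe_ne_top _) hc
    have hR : (f (x + t • w)).toReal ≤ t * A + (1 - t) * fxR :=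
      by have := EReal.toReal_le_toReal hc (hbot _) (EReal.coe_ne_top _); rwa [EReal.toReal_coe] at this
    -- the point x + t w is in the punctured ball
    have hdist : dist (x + t • w) x < δ := by
      rw [dist_eq_norm, add_sub_cancel_left, norm_smul, Real.norm_eq_abs, abs_of_pos ht0]
      have : t ≤ δ / (2 * ‖w‖) := min_le_left _ _
      calc t * ‖w‖ ≤ (δ / (2 * ‖w‖)) * ‖w‖ := by nlinarith
        _ = δ / 2 := by field_simp
        _ < δ := by linarith
    have hne' : x + t • w ≠ x := by
      intro h
      have : t • w = 0 := by
        have := congrArg (fun z => z - x) h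
        simpa using this
      rcases smul_eq_zero.1 this with h' | h'
      · exact ht0.ne' h'
      · exact hw0 h'
    have hloc' := hball ⟨mem_ball.mpr hdist, hne'⟩ hne
    rw [add_sub_cancel_left, norm_smul, Real.norm_eq_abs, abs_of_pos ht0] at hloc'
    -- combine: fxR - r t ‖w‖ ≤ f(x+tw).toReal ≤ t A + (1-t) fxR
    have h1 : fxR - r * (t * ‖w‖) ≤ t * A + (1 - t) * fxR := le_trans hloc' hR
    nlinarith [h1]
  -- Step 4: Hahn-Banach
  have hNhom := NN_smul f x r hbot hconv hfin hr0 hg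
  have hNadd := NN_add f x r hbot hconv hfin hr0 hg
  obtain ⟨g, -, hgN⟩ := exists_extension_of_le_sublinear
    ⟨(⊥ : Submodule ℝ X), 0⟩ (NN f x r)
    (fun c hc v => hNhom c hc v) hNadd
    (by
      rintro ⟨y, hy⟩
      have : y = 0 := by simpa using hy
      subst this
      have := NN_ge f x r hfin 0 hr0 hg
      simpa using this)
  have hbound : ∀ v : X, ‖g v‖ ≤ (r : ℝ) * ‖v‖ := by
    intro v
    rw [Real.norm_eq_abs, abs_le]
    constructor
    · have h1 : g (-v) ≤ NN f x r (-v) := hgN (-v)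
      have h2 : NN f x r (-v) ≤ r * ‖(-v : X)‖ := NN_le f x r hfin (-v) hr0 hg
      have h3 : g (-v) = -(g v) := map_neg g v
      have h4 : ‖(-v : X)‖ = ‖v‖ := norm_neg v
      rw [h3] at h1
      rw [h4] at h2
      linarith
    · exact le_trans (hgN v) (NN_le f x r hfin v hr0 hg)
  set p := g.mkContinuous (r : ℝ) hbound with hp
  have hpnorm : ‖p‖ ≤ (r : ℝ) := g.mkContinuous_norm_le hr0 hbound
  refine ⟨p, ⟨hfin, ?_⟩, ?_⟩
  · intro ε hε
    refine Eventually.of_forall fun u => ?_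
    by_cases hfu : f u = ⊤
    · rw [hfu]; exact le_top
    · have hfuc : ((f u).toReal : EReal) = f u := EReal.coe_toReal hfu (hbot u)
      have hq : NN f x r (u - x) ≤ (f (x + (u - x))).toReal - fxR := by
        apply NN_le_quot f x r hfin (u - x) _ hr0 hg
        rw [add_sub_cancel]
        exact hfu
      rw [add_sub_cancel] at hq
      have hpv : p (u - x) = g (u - x) := rfl
      have hreal : fxR + (p (u - x) - ε * ‖u - x‖) ≤ (f u).toReal := by
        have := le_trans (hgN (u - x)) hq
        rw [hpv]
        nlinarith [norm_nonneg (u - x), this]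
      calc f x + ((p (u - x) - ε * ‖u - x‖ : ℝ) : EReal)
          = ((fxR + (p (u - x) - ε * ‖u - x‖) : ℝ) : EReal) := by
            rw [← hfx, ← EReal.coe_add]
        _ ≤ (((f u).toReal : ℝ) : EReal) := EReal.coe_le_coe_iff.2 hreal
        _ = f u := hfuc
  · have : ‖p‖₊ ≤ r := by
      rw [← NNReal.coe_le_coe]
      exact hpnorm
    exact_mod_cast this

end helpers

/-- if `f : X → ℝ ∪ {+∞}` is convex, then `|∇f|(x) = |∂f|(x)` at every point
`x` with `f(x) < +∞`. -/
theorem locSlope_eq_sdSlope_of_convex (f : X → EReal) (hbot : ∀ u, f u ≠ ⊥)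
    (hconv : ∀ u v : X, ∀ t : ℝ, 0 ≤ t → t ≤ 1 →
      f (t • u + (1 - t) • v) ≤ (t : EReal) * f u + ((1 - t : ℝ) : EReal) * f v)
    (x : X) (hfin : f x ≠ ⊤) : locSlope f x = sdSlope f x := by
  apply le_antisymm
  · exact le_iInf₂ fun p hp => locSlope_le_of_mem f hbot x p hp
  · by_contra h
    rw [not_le] at h
    obtain ⟨r, hr1, hr2⟩ := ENNReal.lt_iff_exists_nnreal_btwn.1 h
    have hev : ∀ᶠ u in 𝓝[≠] x,
        ePlus (f x - f u) / ENNReal.ofReal ‖u - x‖ < (r : ℝ≥0∞) :=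
      Filter.eventually_lt_of_limsup_lt hr1
    obtain ⟨p, hp, hpr⟩ := exists_subgrad f hbot hconv x hfin r hev
    have hle : sdSlope f x ≤ (‖p‖₊ : ℝ≥0∞) := iInf₂_le p hp
    exact absurd (lt_of_le_of_lt (le_trans hle hpr) hr2) (lt_irrefl _)
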